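/- Let q = 2^r with r a positive integer, and let G = SO⁺(4,q) with elements listed as g₁,...,g_N. Then the 𝔽_2-linear map 𝔽_q → 𝔽_2^N sending a to c(a) = (tr(a·Tr g₁),...,tr(a·Tr g_N)) is injective, and its image is exactly the dual code C(G)^⊥ = {v ∈ 𝔽_2^N : v·u = 0 for all u ∈ C(G)}; in particular it is an 𝔽_2-linear isomorphism from 𝔽_q onto C(G)^⊥. -/

import Mathlib

open Finset Matrix

/-- The quadratic form `θ⁺(x) = ∑ i, x_i x_{n+i}` on `F^{2n}` (columns indexed by `Fin n ⊕ Fin n`). -/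
def thetaPlus (F : Type) [Field F] (n : ℕ) (x : Fin n ⊕ Fin n → F) : F :=
  ∑ i : Fin n, x (Sum.inl i) * x (Sum.inr i)

/-- The orthogonal group `O⁺(2n,q)`: invertible matrices preserving `θ⁺`. -/
noncomputable def OplusGrp (F : Type) [Field F] [Fintype F] [DecidableEq F] (n : ℕ) :
    Finset (Matrix (Fin n ⊕ Fin n) (Fin n ⊕ Fin n) F) := by
  classical
  exact Finset.univ.filter (fun w => IsUnit w ∧
    ∀ x : Fin n ⊕ Fin n → F, thetaPlus F n (w.mulVec x) = thetaPlus F n x)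

/-- `SO⁺(2n,q)`: the kernel of `δ⁺(w) = Tr(B ᵗC)` on `O⁺(2n,q)`,
where `w = [[A,B],[C,D]]` in `n × n` blocks. -/
noncomputable def SOplusGrp (F : Type) [Field F] [Fintype F] [DecidableEq F] (n : ℕ) :
    Finset (Matrix (Fin n ⊕ Fin n) (Fin n ⊕ Fin n) F) := by
  classical
  exact (OplusGrp F n).filter
    (fun w => Matrix.trace (Matrix.toBlocks₁₂ w * (Matrix.toBlocks₂₁ w)ᵀ) = 0)

/-- The trace map `tr(x) = x + x² + ⋯ + x^{2^{r−1}}`, valued in `𝔽₂ = {0,1} ⊆ F`. -/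
def trF (F : Type) [Field F] (r : ℕ) (x : F) : F := ∑ i ∈ Finset.range r, x ^ 2 ^ i

/-- The canonical additive character `λ(x) = (−1)^{tr(x)} ∈ {±1} ⊆ ℤ`. -/
noncomputable def lam (F : Type) [Field F] (r : ℕ) (x : F) : ℤ := by
  classical exact if trF F r x = 0 then 1 else -1

/-- The trace map `tr` viewed as a function into `𝔽₂ = ZMod 2`. -/
noncomputable def tr2 (F : Type) [Field F] (r : ℕ) (x : F) : ZMod 2 := by
  classical exact if trF F r x = 0 then 0 else 1

/-- The Kloosterman sum `K(λ;a) = ∑_{α ∈ F*} λ(α + aα⁻¹)`. -/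
noncomputable def Kl (F : Type) [Field F] [Fintype F] (r : ℕ) (a : F) : ℤ := by
  classical
  exact ∑ α ∈ Finset.univ.filter (fun α : F => α ≠ 0), lam F r (α + a * α⁻¹)

/-- The `m`-dimensional Kloosterman sum
`K_m(λ;a) = ∑_{α₁,…,α_m ∈ F*} λ(α₁ + ⋯ + α_m + aα₁⁻¹⋯α_m⁻¹)`;
for `m = 0` this is `K₀(λ;a) = λ(a)`. -/
noncomputable def Klm (F : Type) [Field F] [Fintype F] (r m : ℕ) (a : F) : ℤ := by
  classical
  exact ∑ v ∈ Finset.univ.filter (fun v : Fin m → F => ∀ i, v i ≠ 0),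
    lam F r ((∑ i, v i) + a * (∏ i, v i)⁻¹)

/-- The power moment `MK^h = ∑_{a ∈ F*} K(λ;a)^h`. -/
noncomputable def MK (F : Type) [Field F] [Fintype F] (r h : ℕ) : ℤ := by
  classical exact ∑ a ∈ Finset.univ.filter (fun a : F => a ≠ 0), (Kl F r a) ^ h

/-- The power moment `MK₂^h = ∑_{a ∈ F*} K₂(λ;a)^h` of 2-dimensional Kloosterman sums. -/
noncomputable def MK2 (F : Type) [Field F] [Fintype F] (r h : ℕ) : ℤ := by
  classical exact ∑ a ∈ Finset.univ.filter (fun a : F => a ≠ 0), (Klm F r 2 a) ^ h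

/-- The binary code `C(G) = {u ∈ 𝔽₂^G : ∑_{g ∈ G} u_g Tr(g) = 0 in F}`. -/
noncomputable def code (F : Type) [Field F] [Fintype F] [DecidableEq F]
    {ι : Type} [Fintype ι] [DecidableEq ι] (G : Finset (Matrix ι ι F)) :
    Finset (↥G → ZMod 2) := by
  classical
  exact Finset.univ.filter
    (fun u => ∑ g : ↥G, (u g).val • Matrix.trace (g : Matrix ι ι F) = 0)

/-- Number of codewords of Hamming weight `j` in the code `C(G)`. -/
noncomputable def wtCount (F : Type) [Field F] [Fintype F] [DecidableEq F]
    {ι : Type} [Fintype ι] [DecidableEq ι] (G : Finset (Matrix ι ι F)) (j : ℕ) : ℕ := by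
  classical
  exact ((code F G).filter
    (fun u => (Finset.univ.filter (fun g : ↥G => u g = 1)).card = j)).card

/-- `t! · S(h,t)` where `S(h,t)` is the Stirling number of the second kind,
`S(h,t) = (1/t!) ∑_{j=0}^{t} (−1)^{t−j} C(t,j) j^h`. -/
def tS (h t : ℕ) : ℤ :=
  ∑ j ∈ Finset.range (t + 1), (-1 : ℤ) ^ (t - j) * (t.choose j : ℤ) * (j : ℤ) ^ h

/-- Binomial coefficient with integer arguments: `0` whenever `k < 0` or `k > n`. -/
def ichoose (n k : ℤ) : ℤ := if 0 ≤ k ∧ k ≤ n then (n.toNat.choose k.toNat : ℤ) else 0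

set_option linter.unusedSectionVars false
set_option linter.unnecessarySeqFocus false
set_option linter.unusedTactic false
set_option maxHeartbeats 1000000

section AuxA
variable {F : Type} [Field F] [Fintype F] [DecidableEq F]

variable {F : Type} [Field F] [Fintype F] [DecidableEq F]

lemma two_eq_zero' {r : ℕ} (hr : 1 ≤ r) (hF : Fintype.card F = 2 ^ r) : (2 : F) = 0 := by
  have h := FiniteField.cast_card_eq_zero F
  rw [hF] at h
  push_cast at h
  exact pow_eq_zero_iff (by omega) |>.mp h

lemma charP2' (h2 : (2 : F) = 0) : CharP F 2 := by
  have hd : ringChar F ∣ 2 := ringChar.dvd (by push_cast; exact h2)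
  rcases (Nat.Prime.eq_one_or_self_of_dvd Nat.prime_two _ hd) with h | h
  · exfalso
    have := (ringChar.spec F 1).mpr (h ▸ dvd_refl _)
    simp at this
  · exact h ▸ ringChar.charP F

lemma trF_add' [CharP F 2] (r : ℕ) (x y : F) :
    trF F r (x + y) = trF F r x + trF F r y := by
  unfold trF
  rw [← Finset.sum_add_distrib]
  exact Finset.sum_congr rfl fun i _ => add_pow_char_pow ..

lemma trF_zero' (r : ℕ) : trF F r 0 = 0 := by
  unfold trF
  exact Finset.sum_eq_zero fun i _ => zero_pow (by positivity)

lemma trF_sq [CharP F 2] {r : ℕ} (hF : Fintype.card F = 2 ^ r) (x : F) :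
    trF F r x ^ 2 = trF F r x := by
  have hx : x ^ 2 ^ r = x := by rw [← hF]; exact FiniteField.pow_card x
  have h0 : trF F r x ^ 2 = ∑ i ∈ Finset.range r, x ^ 2 ^ (i + 1) := by
    rw [trF, sum_pow_char]
    exact Finset.sum_congr rfl fun i _ => by rw [← pow_mul, pow_succ]
  have h1 : ∑ i ∈ Finset.range (r + 1), x ^ 2 ^ i
      = (∑ i ∈ Finset.range r, x ^ 2 ^ (i + 1)) + x ^ 2 ^ 0 :=
    Finset.sum_range_succ' _ r
  have h2 : ∑ i ∈ Finset.range (r + 1), x ^ 2 ^ i = trF F r x + x ^ 2 ^ r :=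
    Finset.sum_range_succ _ r
  rw [h0]
  rw [pow_zero, pow_one] at h1
  rw [hx] at h2
  linear_combination h2 - h1

lemma trF_mem [CharP F 2] {r : ℕ} (hF : Fintype.card F = 2 ^ r) (x : F) :
    trF F r x = 0 ∨ trF F r x = 1 := by
  have h := trF_sq hF x
  have : trF F r x * (trF F r x - 1) = 0 := by ring_nf; linear_combination h
  rcases mul_eq_zero.mp this with h' | h'
  · exact Or.inl h'
  · exact Or.inr (by linear_combination h')

lemma tr2_zero' (r : ℕ) : tr2 F r 0 = 0 := by
  simp [tr2, trF_zero']

lemma tr2_add' [CharP F 2] {r : ℕ} (hF : Fintype.card F = 2 ^ r) (x y : F) :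
    tr2 F r (x + y) = tr2 F r x + tr2 F r y := by
  have hxy := trF_add' r x y
  unfold tr2
  rcases trF_mem hF x with hx | hx <;> rcases trF_mem hF y with hy | hy <;>
    simp [hx, hy, hxy, CharTwo.add_self_eq_zero]

lemma exists_trF_ne {r : ℕ} (hr : 1 ≤ r) (hF : Fintype.card F = 2 ^ r) :
    ∃ x : F, trF F r x ≠ 0 := by
  classical
  set p : Polynomial F := ∑ i ∈ Finset.range r, Polynomial.X ^ 2 ^ i with hp
  have hpne : p ≠ 0 := by
    intro h
    have hc : p.coeff 1 = 1 := by
      rw [hp, Polynomial.finset_sum_coeff]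
      rw [Finset.sum_eq_single 0]
      · simp
      · intro i hi hne
        rw [Polynomial.coeff_X_pow]
        simp only [ite_eq_right_iff]
        intro h1
        exact absurd h1.symm (by
          have : 2 ^ i ≠ 1 := by
            have : 1 < 2 ^ i := Nat.one_lt_two_pow_iff.mpr hne
            omega
          exact this)
      · intro h0; exact absurd (Finset.mem_range.mpr (by omega)) h0
    rw [h] at hc; simp at hc
  have hdeg : (p.natDegree : Cardinal) < Cardinal.mk F := by
    have h1 : p.natDegree ≤ 2 ^ (r - 1) := by
      apply Polynomial.natDegree_sum_le_of_forall_le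
      intro i hi
      rw [Polynomial.natDegree_X_pow]
      have := Finset.mem_range.mp hi
      exact Nat.pow_le_pow_right (by norm_num) (by omega)
    have : (2:ℕ) ^ (r-1) < 2 ^ r := Nat.pow_lt_pow_right (by norm_num) (by omega)
    rw [Cardinal.mk_fintype, hF]
    exact_mod_cast (by omega : p.natDegree < 2 ^ r)
  obtain ⟨x, hx⟩ := Polynomial.exists_eval_ne_zero_of_natDegree_lt_card p hpne hdeg
  rw [hp, Polynomial.eval_finset_sum] at hx
  exact ⟨x, by simpa [trF] using hx⟩
end AuxA

section AuxB
variable {F : Type} [Field F] [Fintype F] [DecidableEq F]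

variable {F : Type} [Field F] [Fintype F] [DecidableEq F]

lemma mem_SO_iff (w : Matrix (Fin 2 ⊕ Fin 2) (Fin 2 ⊕ Fin 2) F) :
    w ∈ SOplusGrp F 2 ↔
      (IsUnit w ∧ ∀ x : Fin 2 ⊕ Fin 2 → F, thetaPlus F 2 (w.mulVec x) = thetaPlus F 2 x) ∧
      Matrix.trace (Matrix.toBlocks₁₂ w * (Matrix.toBlocks₂₁ w)ᵀ) = 0 := by
  classical
  simp [SOplusGrp, OplusGrp, Finset.mem_filter, and_assoc]

lemma one_mem_SO : (1 : Matrix (Fin 2 ⊕ Fin 2) (Fin 2 ⊕ Fin 2) F) ∈ SOplusGrp F 2 := by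
  rw [mem_SO_iff]
  refine ⟨⟨isUnit_one, fun x => by rw [Matrix.one_mulVec]⟩, ?_⟩
  have : Matrix.toBlocks₁₂ (1 : Matrix (Fin 2 ⊕ Fin 2) (Fin 2 ⊕ Fin 2) F) = 0 := by
    ext i j
    simp [Matrix.toBlocks₁₂, Matrix.one_apply]
  rw [this, Matrix.zero_mul, Matrix.trace_zero]

/-- The block matrix `[[A,0],[0,A⁻ᵀ]]` with `A = [[x,1],[δ,0]]`. -/
def hmat (F : Type) [Field F] (x δ : F) : Matrix (Fin 2 ⊕ Fin 2) (Fin 2 ⊕ Fin 2) F :=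
  Matrix.fromBlocks !![x, 1; δ, 0] 0 0 !![0, 1; δ⁻¹, x * δ⁻¹]

lemma hmat_mem (h2 : (2 : F) = 0) (x δ : F) (hδ : δ ≠ 0) : hmat F x δ ∈ SOplusGrp F 2 := by
  rw [mem_SO_iff]
  refine ⟨⟨?_, ?_⟩, ?_⟩
  · refine (Matrix.isUnit_iff_isUnit_det _).mpr (Matrix.isUnit_det_of_right_inverse
      (B := Matrix.fromBlocks !![0, δ⁻¹; 1, x * δ⁻¹] 0 0 !![x, δ; 1, 0]) ?_)
    show Matrix.fromBlocks !![x, 1; δ, 0] 0 0 !![0, 1; δ⁻¹, x * δ⁻¹] * _ = 1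
    rw [Matrix.fromBlocks_multiply]
    have e1 : (!![x, 1; δ, 0] : Matrix (Fin 2) (Fin 2) F) * !![0, δ⁻¹; 1, x * δ⁻¹] = 1 := by
      ext i j
      fin_cases i <;> fin_cases j <;>
        simp [Matrix.mul_apply, Fin.sum_univ_two, Matrix.one_apply] <;>
        field_simp <;> linear_combination x * h2
    have e2 : (!![0, 1; δ⁻¹, x * δ⁻¹] : Matrix (Fin 2) (Fin 2) F) * !![x, δ; 1, 0] = 1 := by
      ext i j
      fin_cases i <;> fin_cases j <;>
        simp [Matrix.mul_apply, Fin.sum_univ_two, Matrix.one_apply] <;>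
        field_simp <;> linear_combination x * h2
    simp [e1, e2, Matrix.fromBlocks_one]
  · intro v
    simp only [thetaPlus, hmat, Fin.sum_univ_two, Matrix.mulVec, dotProduct,
      Fintype.sum_sum_type, Matrix.fromBlocks_apply₁₁, Matrix.fromBlocks_apply₁₂,
      Matrix.fromBlocks_apply₂₁, Matrix.fromBlocks_apply₂₂, Matrix.zero_apply,
      Matrix.cons_val', Matrix.cons_val_zero, Matrix.cons_val_one, Matrix.head_cons,
      Matrix.head_fin_const, Matrix.empty_val', Matrix.cons_val_fin_one, Matrix.of_apply]
    field_simp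
    ring_nf
    linear_combination (x * v (Sum.inl 0) * v (Sum.inr 1) * δ) * h2
  · rw [hmat]
    simp [Matrix.toBlocks_fromBlocks₁₂]

lemma hmat_trace (x δ : F) : Matrix.trace (hmat F x δ) = x + x * δ⁻¹ := by
  simp only [hmat, Matrix.trace, Matrix.diag, Fintype.sum_sum_type, Fin.sum_univ_two,
    Matrix.fromBlocks_apply₁₁, Matrix.fromBlocks_apply₂₂, Matrix.cons_val', Matrix.cons_val_zero,
    Matrix.cons_val_one, Matrix.head_cons, Matrix.empty_val', Matrix.cons_val_fin_one,
    Matrix.of_apply, Matrix.head_fin_const]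
  ring
end AuxB

/-- A trace-one element of `SO⁺(4,q)` with 0/1 entries. -/
def wmat (F : Type) [Field F] : Matrix (Fin 2 ⊕ Fin 2) (Fin 2 ⊕ Fin 2) F :=
  Matrix.fromBlocks !![0, 1; 1, 1] !![1, 0; 1, 1] !![1, 1; 0, 1] 0

section C
variable {F : Type} [Field F] [Fintype F] [DecidableEq F]

lemma wmat_mem (h2 : (2 : F) = 0) : wmat F ∈ SOplusGrp F 2 := by
  rw [mem_SO_iff]
  refine ⟨⟨?_, ?_⟩, ?_⟩
  · refine (Matrix.isUnit_iff_isUnit_det _).mpr (Matrix.isUnit_det_of_right_inverse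
      (B := Matrix.fromBlocks !![0, 0; 0, 0] !![1, 1; 0, 1] !![1, 0; 1, 1] !![0, 1; 1, 1]) ?_)
    show Matrix.fromBlocks !![0, 1; 1, 1] !![1, 0; 1, 1] !![1, 1; 0, 1] 0 * _ = 1
    rw [Matrix.fromBlocks_multiply, ← Matrix.fromBlocks_one]
    congr 1 <;> · ext i j
                  fin_cases i <;> fin_cases j <;>
                    simp [Matrix.mul_apply, Fin.sum_univ_two, Matrix.one_apply] <;>
                    first
                      | linear_combination h2
                      | linear_combination 2 * h2
  · intro v
    simp only [thetaPlus, wmat, Fin.sum_univ_two, Matrix.mulVec, dotProduct,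
      Fintype.sum_sum_type, Matrix.fromBlocks_apply₁₁, Matrix.fromBlocks_apply₁₂,
      Matrix.fromBlocks_apply₂₁, Matrix.fromBlocks_apply₂₂, Matrix.zero_apply,
      Matrix.cons_val', Matrix.cons_val_zero, Matrix.cons_val_one, Matrix.head_cons,
      Matrix.head_fin_const, Matrix.empty_val', Matrix.cons_val_fin_one, Matrix.of_apply,
      Matrix.vecHead, Matrix.vecTail]
    ring_nf
    linear_combination (v (Sum.inl 0) * v (Sum.inl 1) + v (Sum.inl 1) ^ 2
      + v (Sum.inl 1) * v (Sum.inr 0)) * h2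
  · simp only [wmat, Matrix.toBlocks_fromBlocks₁₂, Matrix.toBlocks_fromBlocks₂₁]
    show Matrix.trace (!![1, 0; 1, 1] * (!![1, 1; 0, 1] : Matrix (Fin 2) (Fin 2) F)ᵀ) = 0
    have ht : (!![1, 1; 0, 1] : Matrix (Fin 2) (Fin 2) F)ᵀ = !![1, 0; 1, 1] := by
      ext i j
      fin_cases i <;> fin_cases j <;> simp [Matrix.transpose_apply]
    rw [ht]
    simp [Matrix.trace_fin_two, Matrix.mul_apply, Fin.sum_univ_two]
    linear_combination h2

lemma wmat_trace (h2 : (2 : F) = 0) : Matrix.trace (wmat F) = 1 := by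
  simp only [wmat, Matrix.trace, Matrix.diag, Fintype.sum_sum_type, Fin.sum_univ_two,
    Matrix.fromBlocks_apply₁₁, Matrix.fromBlocks_apply₂₂, Matrix.zero_apply,
    Matrix.cons_val', Matrix.cons_val_zero, Matrix.cons_val_one, Matrix.head_cons,
    Matrix.empty_val', Matrix.cons_val_fin_one, Matrix.of_apply, Matrix.head_fin_const]
  ring

lemma trace_surj (h2 : (2 : F) = 0) (t : F) :
    ∃ w ∈ SOplusGrp F 2, Matrix.trace w = t := by
  by_cases hδ : ∃ δ : F, δ ≠ 0 ∧ δ ≠ 1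
  · obtain ⟨δ, hδ0, hδ1⟩ := hδ
    have hne : (1 : F) + δ⁻¹ ≠ 0 := by
      intro h
      apply hδ1
      have hinv : δ⁻¹ = 1 := by linear_combination h - h2
      field_simp at hinv
      exact hinv.symm
    have h1δ : 1 + δ ≠ 0 := by
      intro h
      exact hδ1 (by linear_combination h - h2)
    refine ⟨hmat F (t * (1 + δ⁻¹)⁻¹) δ, hmat_mem h2 _ δ hδ0, ?_⟩
    rw [hmat_trace]
    have hd : (1 : F) + δ⁻¹ = (1 + δ) / δ := by field_simp; ring
    rw [hd]
    field_simp
    ring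
  · push_neg at hδ
    have ht : t = 0 ∨ t = 1 := by
      by_cases h : t = 0
      · exact Or.inl h
      · exact Or.inr (hδ t h)
    rcases ht with rfl | rfl
    · refine ⟨1, one_mem_SO, ?_⟩
      rw [Matrix.trace_one]
      simp only [Fintype.card_sum, Fintype.card_fin]
      linear_combination 2 * h2
    · exact ⟨wmat F, wmat_mem h2, wmat_trace h2⟩
end C

theorem stmt16 (r : ℕ) (hr : 1 ≤ r) (F : Type) [Field F] [Fintype F] [DecidableEq F]
    (hF : Fintype.card F = 2 ^ r)
    (G : Finset (Matrix (Fin 2 ⊕ Fin 2) (Fin 2 ⊕ Fin 2) F)) (hG : G = SOplusGrp F 2) :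
    Function.Injective
      (fun a : F => fun g : ↥G => tr2 F r (a * Matrix.trace (g : Matrix (Fin 2 ⊕ Fin 2) (Fin 2 ⊕ Fin 2) F))) ∧
    (∀ a b : F, ∀ g : ↥G,
      tr2 F r ((a + b) * Matrix.trace (g : Matrix (Fin 2 ⊕ Fin 2) (Fin 2 ⊕ Fin 2) F)) =
        tr2 F r (a * Matrix.trace (g : Matrix (Fin 2 ⊕ Fin 2) (Fin 2 ⊕ Fin 2) F)) + tr2 F r (b * Matrix.trace (g : Matrix (Fin 2 ⊕ Fin 2) (Fin 2 ⊕ Fin 2) F))) ∧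
    Set.range (fun a : F => fun g : ↥G => tr2 F r (a * Matrix.trace (g : Matrix (Fin 2 ⊕ Fin 2) (Fin 2 ⊕ Fin 2) F))) =
      {v : ↥G → ZMod 2 | ∀ u ∈ code F G, ∑ g : ↥G, v g * u g = 0} := by
  classical
  have h2 : (2 : F) = 0 := two_eq_zero' hr hF
  haveI : CharP F 2 := charP2' h2
  haveI : Fact (Nat.Prime 2) := ⟨Nat.prime_two⟩
  -- trace surjectivity onto G
  have hGsurj : ∀ t : F, ∃ g : ↥G,
      Matrix.trace (g : Matrix (Fin 2 ⊕ Fin 2) (Fin 2 ⊕ Fin 2) F) = t := by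
    intro t
    obtain ⟨w, hw, ht⟩ := trace_surj h2 t
    exact ⟨⟨w, hG ▸ hw⟩, ht⟩
  -- nondegeneracy
  have hnd : ∀ a : F, a ≠ 0 → ∃ x : F, tr2 F r (a * x) ≠ 0 := by
    intro a ha
    obtain ⟨x, hx⟩ := exists_trF_ne hr hF
    refine ⟨a⁻¹ * x, ?_⟩
    rw [← mul_assoc, mul_inv_cancel₀ ha, one_mul]
    simp [tr2, hx]
  have key : ∀ a : F,
      (∀ g : ↥G, tr2 F r (a * Matrix.trace (g : Matrix (Fin 2 ⊕ Fin 2) (Fin 2 ⊕ Fin 2) F)) = 0) →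
      a = 0 := by
    intro a ha
    by_contra h0
    obtain ⟨x, hx⟩ := hnd a h0
    obtain ⟨g, hg⟩ := hGsurj x
    exact hx (by rw [← hg]; exact ha g)
  have hc01 : ∀ c : ZMod 2, c = 0 ∨ c = 1 := by
    intro c
    fin_cases c
    · exact Or.inl rfl
    · exact Or.inr rfl
  have hzz : ∀ z : ZMod 2, z + z = 0 := by
    intro z
    fin_cases z <;> rfl
  -- the ZMod 2 module structure on F
  letI : Module (ZMod 2) F := AddCommGroup.zmodModule (by
    intro x
    show 2 • x = 0
    rw [two_smul]
    exact CharTwo.add_self_eq_zero x)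
  have hms' : ∀ (c : ZMod 2) (a x : F), (c • a) * x = c • (a * x) := by
    intro c a x
    rcases hc01 c with rfl | rfl <;> simp
  have hvs : ∀ (c : ZMod 2) (x : F), (c.val : ℕ) • x = c • x := by
    intro c x
    rcases hc01 c with rfl | rfl
    · simp
    · simp [ZMod.val_one]
  have hms : ∀ (c : ZMod 2) (a x : F), c • (a * x) = a * (c • x) := by
    intro c a x
    rcases hc01 c with rfl | rfl <;> simp
  have htr2s : ∀ (c : ZMod 2) (x : F), tr2 F r (c • x) = c * tr2 F r x := by
    intro c x
    rcases hc01 c with rfl | rfl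
    · rw [zero_smul, zero_mul]; exact tr2_zero' r
    · rw [one_smul, one_mul]
  let T : F →+ ZMod 2 :=
    { toFun := tr2 F r, map_zero' := tr2_zero' r, map_add' := tr2_add' hF }
  let φ : (↥G → ZMod 2) →ₗ[ZMod 2] F :=
    { toFun := fun u => ∑ g : ↥G, u g • Matrix.trace (g : Matrix (Fin 2 ⊕ Fin 2) (Fin 2 ⊕ Fin 2) F),
      map_add' := fun u w => by
        rw [← Finset.sum_add_distrib]
        exact Finset.sum_congr rfl fun g _ => by rw [Pi.add_apply, add_smul],
      map_smul' := fun c u => by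
        rw [RingHom.id_apply, Finset.smul_sum]
        exact Finset.sum_congr rfl fun g _ => by rw [Pi.smul_apply, smul_assoc] }
  have hφ : ∀ u, φ u = ∑ g : ↥G, u g • Matrix.trace (g : Matrix (Fin 2 ⊕ Fin 2) (Fin 2 ⊕ Fin 2) F) :=
    fun _ => rfl
  have hcode : ∀ u : ↥G → ZMod 2, u ∈ code F G ↔ φ u = 0 := by
    intro u
    have hs : ∑ g : ↥G, (u g).val • Matrix.trace (g : Matrix (Fin 2 ⊕ Fin 2) (Fin 2 ⊕ Fin 2) F) = φ u := by
      rw [hφ]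
      exact Finset.sum_congr rfl fun g _ => hvs _ _
    simp only [code, Finset.mem_filter, Finset.mem_univ, true_and]
    rw [hs]
  have hφs : Function.Surjective φ := by
    intro t
    obtain ⟨g, hg⟩ := hGsurj t
    refine ⟨Pi.single g 1, ?_⟩
    rw [hφ, Finset.sum_eq_single g]
    · rw [Pi.single_eq_same, one_smul, hg]
    · intro g' _ hne
      rw [Pi.single_eq_of_ne hne, zero_smul]
    · intro h; exact absurd (Finset.mem_univ g) h
  refine ⟨?_, ?_, ?_⟩
  · -- injectivity
    intro a b hab
    have h : ∀ g : ↥G, tr2 F r ((a + b) * Matrix.trace (g : Matrix (Fin 2 ⊕ Fin 2) (Fin 2 ⊕ Fin 2) F)) = 0 := by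
      intro g
      have hg := congrFun hab g
      simp only at hg
      rw [add_mul, tr2_add' hF, hg, hzz]
    have hab0 := key _ h
    have : a = a + (b + b) := by rw [CharTwo.add_self_eq_zero, add_zero]
    rw [this, ← add_assoc, hab0, zero_add]
  · intro a b g
    rw [add_mul]
    exact tr2_add' hF _ _
  · ext v
    simp only [Set.mem_range, Set.mem_setOf_eq]
    constructor
    · rintro ⟨a, rfl⟩ u hu
      simp only
      have h1 : ∀ g : ↥G, tr2 F r (a * Matrix.trace (g : Matrix (Fin 2 ⊕ Fin 2) (Fin 2 ⊕ Fin 2) F)) * u g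
          = T (u g • (a * Matrix.trace (g : Matrix (Fin 2 ⊕ Fin 2) (Fin 2 ⊕ Fin 2) F))) := by
        intro g
        show _ = tr2 F r _
        rw [htr2s, mul_comm]
      calc ∑ g : ↥G, tr2 F r (a * Matrix.trace (g : Matrix (Fin 2 ⊕ Fin 2) (Fin 2 ⊕ Fin 2) F)) * u g
          = ∑ g : ↥G, T (u g • (a * Matrix.trace (g : Matrix (Fin 2 ⊕ Fin 2) (Fin 2 ⊕ Fin 2) F))) :=
            Finset.sum_congr rfl fun g _ => h1 g
        _ = T (∑ g : ↥G, u g • (a * Matrix.trace (g : Matrix (Fin 2 ⊕ Fin 2) (Fin 2 ⊕ Fin 2) F))) :=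
            (map_sum T _ _).symm
        _ = T (a * φ u) := by
            rw [hφ, Finset.mul_sum]
            congr 1
            exact Finset.sum_congr rfl fun g _ => hms _ _ _
        _ = 0 := by rw [(hcode u).mp hu, mul_zero]; exact tr2_zero' r
    · intro hv
      let Lv : (↥G → ZMod 2) →ₗ[ZMod 2] ZMod 2 :=
        { toFun := fun u => ∑ g : ↥G, v g * u g,
          map_add' := fun u w => by
            rw [← Finset.sum_add_distrib]
            exact Finset.sum_congr rfl fun g _ => by rw [Pi.add_apply, mul_add],
          map_smul' := fun c u => by
            rw [RingHom.id_apply, Finset.smul_sum]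
            exact Finset.sum_congr rfl fun g _ => by
              rw [Pi.smul_apply, smul_eq_mul, smul_eq_mul]; ring }
      have hLv : ∀ u, Lv u = ∑ g : ↥G, v g * u g := fun _ => rfl
      have hker : LinearMap.ker φ ≤ LinearMap.ker Lv := by
        intro u hu
        exact LinearMap.mem_ker.mpr (hv u ((hcode u).mpr (LinearMap.mem_ker.mp hu)))
      let e := φ.quotKerEquivOfSurjective hφs
      have he : ∀ u, e (Submodule.Quotient.mk u) = φ u := fun u => rfl
      let ℓ : F →ₗ[ZMod 2] ZMod 2 :=
        (Submodule.liftQ (LinearMap.ker φ) Lv hker).comp (e.symm : F →ₗ[ZMod 2] _)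
      have hℓ : ∀ u, ℓ (φ u) = Lv u := by
        intro u
        have hsymm : e.symm (φ u) = Submodule.Quotient.mk u := by
          rw [LinearEquiv.symm_apply_eq, he]
        show (Submodule.liftQ (LinearMap.ker φ) Lv hker) (e.symm (φ u)) = Lv u
        rw [hsymm, Submodule.liftQ_apply]
      -- classify functionals
      haveI : Module.Finite (ZMod 2) F := Module.Finite.of_finite
      let Φ : F →ₗ[ZMod 2] (F →ₗ[ZMod 2] ZMod 2) :=
        { toFun := fun a =>
            { toFun := fun x => tr2 F r (a * x),
              map_add' := fun x y => by
                show tr2 F r (a * (x + y)) = tr2 F r (a * x) + tr2 F r (a * y)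
                rw [mul_add]; exact tr2_add' hF _ _,
              map_smul' := fun c x => by
                show tr2 F r (a * c • x) = c • tr2 F r (a * x)
                rw [← hms, htr2s, smul_eq_mul] },
          map_add' := fun a b => by
            ext x
            show tr2 F r ((a + b) * x) = tr2 F r (a * x) + tr2 F r (b * x)
            rw [add_mul]
            exact tr2_add' hF _ _,
          map_smul' := fun c a => by
            ext x
            show tr2 F r ((c • a) * x) = c • tr2 F r (a * x)
            rw [hms', htr2s, smul_eq_mul] }
      have hΦinj : Function.Injective Φ := by
        rw [injective_iff_map_eq_zero]
        intro a ha
        by_contra h0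
        obtain ⟨x, hx⟩ := hnd a h0
        exact hx (by have := congrFun (congrArg DFunLike.coe ha) x; simp at this; exact this)
      have hΦsurj : Function.Surjective Φ :=
        (LinearMap.injective_iff_surjective_of_finrank_eq_finrank
          (Module.finrank_linearMap_self (ZMod 2) (ZMod 2) F).symm).mp hΦinj
      obtain ⟨a, ha⟩ := hΦsurj ℓ
      refine ⟨a, ?_⟩
      funext g
      have h1 : Lv (Pi.single g 1) = v g := by
        rw [hLv, Finset.sum_eq_single g]
        · rw [Pi.single_eq_same, mul_one]
        · intro g' _ hne
          rw [Pi.single_eq_of_ne hne, mul_zero]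
        · intro h; exact absurd (Finset.mem_univ g) h
      have h2' : φ (Pi.single g 1) = Matrix.trace (g : Matrix (Fin 2 ⊕ Fin 2) (Fin 2 ⊕ Fin 2) F) := by
        rw [hφ, Finset.sum_eq_single g]
        · rw [Pi.single_eq_same, one_smul]
        · intro g' _ hne
          rw [Pi.single_eq_of_ne hne, zero_smul]
        · intro h; exact absurd (Finset.mem_univ g) h
      show tr2 F r (a * Matrix.trace (g : Matrix (Fin 2 ⊕ Fin 2) (Fin 2 ⊕ Fin 2) F)) = v g
      calc tr2 F r (a * Matrix.trace (g : Matrix (Fin 2 ⊕ Fin 2) (Fin 2 ⊕ Fin 2) F))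
          = Φ a (Matrix.trace (g : Matrix (Fin 2 ⊕ Fin 2) (Fin 2 ⊕ Fin 2) F)) := rfl
        _ = ℓ (Matrix.trace (g : Matrix (Fin 2 ⊕ Fin 2) (Fin 2 ⊕ Fin 2) F)) := by rw [ha]
        _ = ℓ (φ (Pi.single g 1)) := by rw [h2']
        _ = Lv (Pi.single g 1) := hℓ _
        _ = v g := h1
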